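/- Let A ∈ ℝ, let m ≥ 1, let λ_1, …, λ_m be non-real complex numbers of modulus 1 such that for all i ≠ j, λ_i ∉ {λ_j, conj(λ_j)}, let C_1, …, C_m be nonzero polynomials with complex coefficients, and let r : ℕ → ℝ satisfy r(n) → 0 as n → ∞. Define the real sequence u_n = A + Σ_{i=1}^m ( C_i(n) λ_i^n + conj(C_i(n)) conj(λ_i)^n ) + r(n). Then u_n does not tend to ∞ as n → ∞. -/

import Mathlib

open Filter
open Finset

private lemma cesaro_unit {μ : ℂ} (h1 : ‖μ‖ = 1) (hne : μ ≠ 1) :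
    Tendsto (fun N : ℕ => (∑ n ∈ Finset.range N, μ ^ n) / (N : ℂ)) atTop (nhds 0) := by
  apply squeeze_zero_norm (a := fun N : ℕ => (2 / ‖μ - 1‖) / N)
  · intro N
    rw [geom_sum_eq hne, norm_div, norm_div, Complex.norm_natCast]
    gcongr
    exact (norm_sub_le _ _).trans (by rw [norm_pow, h1]; norm_num)
  · exact tendsto_const_div_atTop_nhds_zero_nat _

private lemma mean_term (a : ℂ) {μ : ℂ} (h1 : ‖μ‖ = 1) :
    Tendsto (fun N : ℕ => (∑ n ∈ Finset.range N, a * μ ^ n) / (N : ℂ)) atTop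
      (nhds (if μ = 1 then a else 0)) := by
  by_cases hμ : μ = 1
  · simp only [hμ, one_pow, mul_one, Finset.sum_const, Finset.card_range, nsmul_eq_mul, if_pos]
    refine Tendsto.congr' ?_ (tendsto_const_nhds (x := a))
    filter_upwards [eventually_ge_atTop 1] with N hN
    have hN0 : (N : ℂ) ≠ 0 := Nat.cast_ne_zero.mpr (by omega)
    field_simp
  · rw [if_neg hμ]
    have := (cesaro_unit h1 hμ).const_mul a
    rw [mul_zero] at this
    refine this.congr fun N => ?_
    rw [← mul_div_assoc, Finset.mul_sum]

private lemma cesaro_nonneg {a : ℕ → ℝ} {l : ℝ} (h0 : ∀ᶠ n in atTop, 0 ≤ a n)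
    (h : Tendsto (fun N : ℕ => (∑ n ∈ Finset.range N, a n) / N) atTop (nhds l)) : 0 ≤ l := by
  obtain ⟨N0, hN0⟩ := eventually_atTop.mp h0
  set S0 := ∑ n ∈ Finset.range N0, a n with hS0
  refine le_of_tendsto_of_tendsto (tendsto_const_div_atTop_nhds_zero_nat S0) h ?_
  filter_upwards [eventually_ge_atTop N0, eventually_ge_atTop 1] with N h1 h2
  have hsplit : S0 + ∑ n ∈ Finset.Ico N0 N, a n = ∑ n ∈ Finset.range N, a n := by
    rw [hS0, Finset.range_eq_Ico, Finset.range_eq_Ico]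
    exact Finset.sum_Ico_consecutive a (Nat.zero_le _) h1
  have hnn : 0 ≤ ∑ n ∈ Finset.Ico N0 N, a n :=
    Finset.sum_nonneg fun n hn => hN0 n (Finset.mem_Ico.mp hn).1
  have : S0 ≤ ∑ n ∈ Finset.range N, a n := by linarith
  have hNpos : (0:ℝ) < N := by exact_mod_cast Nat.lt_of_lt_of_le Nat.zero_lt_one h2
  gcongr

private lemma tendsto_eval_div_pow {P : Polynomial ℂ} {d : ℕ} (hd : P.natDegree ≤ d) :
    Tendsto (fun n : ℕ => P.eval (n:ℂ) / (n:ℂ)^d) atTop (nhds (P.coeff d)) := by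
  have heval : ∀ n : ℕ, P.eval (n:ℂ) / (n:ℂ)^d
      = ∑ k ∈ Finset.range (d+1), P.coeff k * ((n:ℂ)^k / (n:ℂ)^d) := by
    intro n
    rw [Polynomial.eval_eq_sum_range' (Nat.lt_succ_of_le hd), Finset.sum_div]
    exact Finset.sum_congr rfl fun k _ => (mul_div_assoc _ _ _)
  have hsum : P.coeff d = ∑ k ∈ Finset.range (d+1), (if k = d then P.coeff d else 0) := by
    rw [Finset.sum_ite_eq' (Finset.range (d+1)) d (fun _ => P.coeff d),
      if_pos (Finset.self_mem_range_succ d)]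
  refine Tendsto.congr (fun n => (heval n).symm) ?_
  rw [hsum]
  refine tendsto_finset_sum _ fun k hk => ?_
  by_cases hkd : k = d
  · subst hkd
    rw [if_pos rfl]
    refine Tendsto.congr' ?_ tendsto_const_nhds
    filter_upwards [eventually_ge_atTop 1] with n hn
    rw [div_self (pow_ne_zero _ (Nat.cast_ne_zero.mpr (by omega))), mul_one]
  · simp only [if_neg hkd]
    have hklt : k < d := lt_of_le_of_ne (Nat.lt_succ_iff.mp (Finset.mem_range.mp hk)) hkd
    apply squeeze_zero_norm' (a := fun n : ℕ => ‖P.coeff k‖ / n)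
    · filter_upwards [eventually_ge_atTop 1] with n hn
      have hn1 : (1:ℝ) ≤ n := Nat.one_le_cast.mpr hn
      have h2 : (n:ℝ)^k / (n:ℝ)^d ≤ 1 / n := by
        rw [div_le_div_iff₀ (by positivity) (by positivity)]
        calc (n:ℝ)^k * n = (n:ℝ)^(k+1) := by ring
          _ ≤ (n:ℝ)^d := pow_le_pow_right₀ hn1 hklt
          _ = 1 * (n:ℝ)^d := by ring
      calc ‖P.coeff k * ((n:ℂ)^k / (n:ℂ)^d)‖
          = ‖P.coeff k‖ * ((n:ℝ)^k / (n:ℝ)^d) := by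
            rw [norm_mul, norm_div, norm_pow, norm_pow, Complex.norm_natCast]
        _ ≤ ‖P.coeff k‖ * (1 / n) := mul_le_mul_of_nonneg_left h2 (norm_nonneg _)
        _ = ‖P.coeff k‖ / n := by ring
    · exact tendsto_const_div_atTop_nhds_zero_nat _



/-- If u_n = A + Σ_i (C_i(n) λ_i^n + conj(C_i(n)) conj(λ_i)^n) + r(n) with
A real, the λ_i non-real of modulus 1 and pairwise neither equal nor conjugate, the C_i
nonzero complex polynomials, and r(n) → 0, then u_n does not tend to ∞. -/
theorem no_divergence_without_real_dominant_root
    (A : ℝ) (m : ℕ) (hm : 1 ≤ m) (lam : Fin m → ℂ)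
    (hmod : ∀ i, ‖lam i‖ = 1)
    (hnonreal : ∀ i, (lam i).im ≠ 0)
    (hsep : ∀ i j, i ≠ j → lam i ≠ lam j ∧ lam i ≠ star (lam j))
    (C : Fin m → Polynomial ℂ) (hC : ∀ i, C i ≠ 0)
    (r : ℕ → ℝ) (hr : Tendsto r atTop (nhds 0))
    (u : ℕ → ℝ)
    (hu : ∀ n : ℕ, (u n : ℂ) =
      (A : ℂ) + ∑ i, ((C i).eval (n : ℂ) * lam i ^ n
        + star ((C i).eval (n : ℂ)) * (star (lam i)) ^ n) + (r n : ℂ)) :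
    ¬ Tendsto u atTop atTop := by
  intro hdiv
  classical
  simp only [Complex.star_def] at hu hsep
  set d : ℕ := Finset.univ.sup (fun i => (C i).natDegree) with hddef
  set c : Fin m → ℂ := fun i => (C i).coeff d with hcdef
  set G : ℕ → ℂ := fun n => ∑ i, (c i * lam i ^ n
      + (starRingEnd ℂ) (c i) * ((starRingEnd ℂ) (lam i)) ^ n) with hGdef
  -- basic facts about lam
  have hlamne : ∀ i, lam i ≠ 0 := by
    intro i h
    have := hmod i
    rw [h] at this
    simp at this
  have hnorm : ∀ i, ‖lam i‖ = 1 := fun i => by exact hmod i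
  have hnormc : ∀ i, ‖(starRingEnd ℂ) (lam i)‖ = 1 := fun i => by
    rw [RCLike.norm_conj]; exact hnorm i
  have hlam1 : ∀ i, lam i ≠ 1 := by
    intro i h
    exact hnonreal i (by rw [h]; rfl)
  have hconj1 : ∀ i, (starRingEnd ℂ) (lam i) ≠ 1 := by
    intro i h
    apply hlam1 i
    have := congrArg (starRingEnd ℂ) h
    rwa [Complex.conj_conj, map_one] at this
  have hmulconj : ∀ i, lam i * (starRingEnd ℂ) (lam i) = 1 := by
    intro i
    rw [Complex.mul_conj]
    norm_cast
    rw [Complex.normSq_eq_norm_sq, hmod i, one_pow]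
  have key : ∀ i j : Fin m, (lam i * (starRingEnd ℂ) (lam j) = 1) ↔ i = j := by
    intro i j
    constructor
    · intro h
      by_contra hij
      apply (hsep i j hij).1
      have hcj : (starRingEnd ℂ) (lam j) ≠ 0 := by
        simpa using hlamne j
      exact mul_right_cancel₀ hcj (h.trans (hmulconj j).symm)
    · rintro rfl; exact hmulconj i
  have key2 : ∀ i j : Fin m, lam i * lam j ≠ 1 := by
    intro i j h
    have hji : lam i = (starRingEnd ℂ) (lam j) := by
      have h2 : (starRingEnd ℂ) (lam j) * lam j = 1 := by
        rw [mul_comm]; exact hmulconj j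
      exact mul_right_cancel₀ (hlamne j) (h.trans h2.symm)
    rcases eq_or_ne i j with rfl | hij
    · exact hnonreal i (Complex.conj_eq_iff_im.mp hji.symm)
    · exact (hsep i j hij).2 hji
  have key3 : ∀ i j : Fin m, (starRingEnd ℂ) (lam i) * (starRingEnd ℂ) (lam j) ≠ 1 := by
    intro i j h
    apply key2 i j
    have := congrArg (starRingEnd ℂ) h
    rwa [map_mul, Complex.conj_conj, Complex.conj_conj, map_one] at this
  have key4 : ∀ i j : Fin m, ((starRingEnd ℂ) (lam i) * lam j = 1) ↔ i = j := by
    intro i j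
    rw [mul_comm, key j i]
    exact eq_comm
  -- G is real valued
  have hGconj : ∀ n, (starRingEnd ℂ) (G n) = G n := by
    intro n
    rw [hGdef]
    simp only [map_sum, map_add, map_mul, map_pow, Complex.conj_conj]
    exact Finset.sum_congr rfl fun i _ => add_comm _ _
  set g : ℕ → ℝ := fun n => (G n).re with hgdef
  have hgG : ∀ n, ((g n : ℝ) : ℂ) = G n := fun n => Complex.conj_eq_iff_re.mp (hGconj n)
  -- mean of G tends to 0
  have hMeanG : Tendsto (fun N : ℕ => (∑ n ∈ Finset.range N, G n) / (N:ℂ)) atTop (nhds 0) := by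
    have hswap : ∀ N : ℕ, (∑ n ∈ Finset.range N, G n) / (N:ℂ)
        = ∑ i, ((∑ n ∈ Finset.range N, c i * lam i ^ n) / (N:ℂ)
            + (∑ n ∈ Finset.range N, (starRingEnd ℂ) (c i) * ((starRingEnd ℂ) (lam i)) ^ n) / (N:ℂ)) := by
      intro N
      simp only [hGdef]
      rw [Finset.sum_comm, Finset.sum_div]
      exact Finset.sum_congr rfl fun i _ => by rw [Finset.sum_add_distrib, add_div]
    refine Tendsto.congr (fun N => (hswap N).symm) ?_
    have h0 : (0:ℂ) = ∑ i : Fin m, ((if lam i = 1 then c i else 0)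
        + (if (starRingEnd ℂ) (lam i) = 1 then (starRingEnd ℂ) (c i) else 0)) := by
      rw [Finset.sum_eq_zero]
      intro i _
      rw [if_neg (hlam1 i), if_neg (hconj1 i), add_zero]
    rw [h0]
    exact tendsto_finset_sum _ fun i _ =>
      (mean_term (c i) (hnorm i)).add (mean_term ((starRingEnd ℂ) (c i)) (hnormc i))
  -- mean of G² tends to L
  have hG2 : ∀ n : ℕ, (G n)^2 = ∑ i, ∑ j,
      (c i * c j * (lam i * lam j) ^ n
       + c i * (starRingEnd ℂ) (c j) * (lam i * (starRingEnd ℂ) (lam j)) ^ n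
       + (starRingEnd ℂ) (c i) * c j * ((starRingEnd ℂ) (lam i) * lam j) ^ n
       + (starRingEnd ℂ) (c i) * (starRingEnd ℂ) (c j)
          * ((starRingEnd ℂ) (lam i) * (starRingEnd ℂ) (lam j)) ^ n) := by
    intro n
    rw [sq]
    simp only [hGdef]
    rw [Finset.sum_mul_sum]
    refine Finset.sum_congr rfl fun i _ => Finset.sum_congr rfl fun j _ => ?_
    rw [mul_pow, mul_pow, mul_pow, mul_pow]
    ring
  have hpair : ∀ i j : Fin m, Tendsto (fun N : ℕ =>
      (∑ n ∈ Finset.range N, c i * c j * (lam i * lam j) ^ n) / (N:ℂ)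
      + (∑ n ∈ Finset.range N, c i * (starRingEnd ℂ) (c j) * (lam i * (starRingEnd ℂ) (lam j)) ^ n) / (N:ℂ)
      + (∑ n ∈ Finset.range N, (starRingEnd ℂ) (c i) * c j * ((starRingEnd ℂ) (lam i) * lam j) ^ n) / (N:ℂ)
      + (∑ n ∈ Finset.range N, (starRingEnd ℂ) (c i) * (starRingEnd ℂ) (c j)
          * ((starRingEnd ℂ) (lam i) * (starRingEnd ℂ) (lam j)) ^ n) / (N:ℂ)) atTop
      (nhds (if i = j then 2 * (Complex.normSq (c i) : ℂ) else 0)) := by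
    intro i j
    have n1 : ‖lam i * lam j‖ = 1 := by rw [norm_mul, hnorm, hnorm, mul_one]
    have n2 : ‖lam i * (starRingEnd ℂ) (lam j)‖ = 1 := by rw [norm_mul, hnorm, hnormc, mul_one]
    have n3 : ‖(starRingEnd ℂ) (lam i) * lam j‖ = 1 := by rw [norm_mul, hnormc, hnorm, mul_one]
    have n4 : ‖(starRingEnd ℂ) (lam i) * (starRingEnd ℂ) (lam j)‖ = 1 := by
      rw [norm_mul, hnormc, hnormc, mul_one]
    have t1 := mean_term (c i * c j) n1
    have t2 := mean_term (c i * (starRingEnd ℂ) (c j)) n2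
    have t3 := mean_term ((starRingEnd ℂ) (c i) * c j) n3
    have t4 := mean_term ((starRingEnd ℂ) (c i) * (starRingEnd ℂ) (c j)) n4
    rw [if_neg (key2 i j)] at t1
    rw [if_neg (key3 i j)] at t4
    have := ((t1.add t2).add t3).add t4
    rcases eq_or_ne i j with rfl | hij
    · rw [if_pos ((key i i).mpr rfl)] at t2
      rw [if_pos ((key4 i i).mpr rfl)] at t3
      have := ((t1.add t2).add t3).add t4
      rw [if_pos rfl]
      convert this using 2
      rw [Complex.mul_conj]
      ring_nf
      rw [mul_comm ((starRingEnd ℂ) (c i)) (c i), Complex.mul_conj]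
      ring
    · rw [if_neg ((key i j).not.mpr hij)] at t2
      rw [if_neg ((key4 i j).not.mpr hij)] at t3
      have := ((t1.add t2).add t3).add t4
      rw [if_neg hij]
      simpa using this
  have hMeanG2 : Tendsto (fun N : ℕ => (∑ n ∈ Finset.range N, (G n)^2) / (N:ℂ)) atTop
      (nhds (∑ i, 2 * (Complex.normSq (c i) : ℂ))) := by
    have hswap2 : ∀ N : ℕ, (∑ n ∈ Finset.range N, (G n)^2) / (N:ℂ)
        = ∑ i, ∑ j, ((∑ n ∈ Finset.range N, c i * c j * (lam i * lam j) ^ n) / (N:ℂ)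
          + (∑ n ∈ Finset.range N, c i * (starRingEnd ℂ) (c j) * (lam i * (starRingEnd ℂ) (lam j)) ^ n) / (N:ℂ)
          + (∑ n ∈ Finset.range N, (starRingEnd ℂ) (c i) * c j * ((starRingEnd ℂ) (lam i) * lam j) ^ n) / (N:ℂ)
          + (∑ n ∈ Finset.range N, (starRingEnd ℂ) (c i) * (starRingEnd ℂ) (c j)
              * ((starRingEnd ℂ) (lam i) * (starRingEnd ℂ) (lam j)) ^ n) / (N:ℂ)) := by
      intro N
      simp only [hG2]
      rw [Finset.sum_comm, Finset.sum_div]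
      refine Finset.sum_congr rfl fun i _ => ?_
      rw [Finset.sum_comm, Finset.sum_div]
      refine Finset.sum_congr rfl fun j _ => ?_
      rw [Finset.sum_add_distrib, Finset.sum_add_distrib, Finset.sum_add_distrib,
        add_div, add_div, add_div]
    refine Tendsto.congr (fun N => (hswap2 N).symm) ?_
    have h0 : (∑ i, 2 * (Complex.normSq (c i) : ℂ))
        = ∑ i : Fin m, ∑ j : Fin m, (if i = j then 2 * (Complex.normSq (c i) : ℂ) else 0) := by
      refine Finset.sum_congr rfl fun i _ => ?_
      rw [Finset.sum_ite_eq (Finset.univ : Finset (Fin m)) i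
        (fun _ => 2 * (Complex.normSq (c i) : ℂ)), if_pos (Finset.mem_univ i)]
    rw [h0]
    exact tendsto_finset_sum _ fun i _ => tendsto_finset_sum _ fun j _ => hpair i j
  -- real means
  set Lr : ℝ := ∑ i, 2 * Complex.normSq (c i) with hLrdef
  have hMeang : Tendsto (fun N : ℕ => (∑ n ∈ Finset.range N, g n) / (N:ℝ)) atTop (nhds 0) := by
    have hcast : ∀ N : ℕ, (∑ n ∈ Finset.range N, g n) / (N:ℝ)
        = ((∑ n ∈ Finset.range N, G n) / (N:ℂ)).re := by
      intro N
      have : (((∑ n ∈ Finset.range N, g n) / (N:ℝ) : ℝ) : ℂ)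
          = (∑ n ∈ Finset.range N, G n) / (N:ℂ) := by
        push_cast
        rw [Finset.sum_congr rfl fun n _ => hgG n]
      rw [← this, Complex.ofReal_re]
    refine Tendsto.congr (fun N => (hcast N).symm) ?_
    exact (Complex.continuous_re.tendsto 0).comp hMeanG
  have hMeang2 : Tendsto (fun N : ℕ => (∑ n ∈ Finset.range N, (g n)^2) / (N:ℝ)) atTop (nhds Lr) := by
    have hcast : ∀ N : ℕ, (∑ n ∈ Finset.range N, (g n)^2) / (N:ℝ)
        = ((∑ n ∈ Finset.range N, (G n)^2) / (N:ℂ)).re := by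
      intro N
      have : (((∑ n ∈ Finset.range N, (g n)^2) / (N:ℝ) : ℝ) : ℂ)
          = (∑ n ∈ Finset.range N, (G n)^2) / (N:ℂ) := by
        push_cast
        rw [Finset.sum_congr rfl fun n _ => by rw [hgG n]]
      rw [← this, Complex.ofReal_re]
    refine Tendsto.congr (fun N => (hcast N).symm) ?_
    have hcastL : ((Lr : ℝ) : ℂ) = ∑ i, 2 * (Complex.normSq (c i) : ℂ) := by
      rw [hLrdef]; push_cast; ring
    have := (Complex.continuous_re.tendsto _).comp hMeanG2
    rw [← hcastL, Complex.ofReal_re] at this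
    exact this
  -- Lr > 0
  have hLr : 0 < Lr := by
    obtain ⟨i0, -, hi0⟩ := Finset.exists_mem_eq_sup (Finset.univ : Finset (Fin m))
      ⟨⟨0, hm⟩, Finset.mem_univ _⟩ (fun i => (C i).natDegree)
    have hc0 : c i0 ≠ 0 := by
      simp only [hcdef]
      rw [hddef, hi0, Polynomial.coeff_natDegree]
      exact Polynomial.leadingCoeff_ne_zero.mpr (hC i0)
    calc (0:ℝ) < 2 * Complex.normSq (c i0) := by
          have := Complex.normSq_pos.mpr hc0; linarith
      _ ≤ Lr := Finset.single_le_sum (f := fun i => 2 * Complex.normSq (c i))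
          (fun i _ => mul_nonneg (by norm_num) (Complex.normSq_nonneg _)) (Finset.mem_univ i0)
  -- bound on g
  set M : ℝ := ∑ i, 2 * ‖c i‖ with hMdef
  have hM0 : 0 ≤ M := Finset.sum_nonneg fun i _ => by positivity
  have hgM : ∀ n, |g n| ≤ M := by
    intro n
    refine (Complex.abs_re_le_norm (G n)).trans ?_
    simp only [hGdef]
    calc ‖∑ i, (c i * lam i ^ n + (starRingEnd ℂ) (c i) * ((starRingEnd ℂ) (lam i)) ^ n)‖
        ≤ ∑ i, ‖c i * lam i ^ n + (starRingEnd ℂ) (c i) * ((starRingEnd ℂ) (lam i)) ^ n‖ :=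
          norm_sum_le _ _
      _ ≤ M := by
          rw [hMdef]
          refine Finset.sum_le_sum fun i _ => ?_
          calc ‖c i * lam i ^ n + (starRingEnd ℂ) (c i) * ((starRingEnd ℂ) (lam i)) ^ n‖
              ≤ ‖c i * lam i ^ n‖ + ‖(starRingEnd ℂ) (c i) * ((starRingEnd ℂ) (lam i)) ^ n‖ :=
                norm_add_le _ _
            _ = 2 * ‖c i‖ := by
                rw [norm_mul, norm_mul, norm_pow, norm_pow, hnorm, hnormc, RCLike.norm_conj]
                ring
  -- eventual lower bound on g
  have hglb : ∀ ε : ℝ, 0 < ε → ∀ᶠ n in atTop, -ε ≤ g n := by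
    intro ε hε
    by_cases hd0 : d = 0
    · -- degree 0 case : eval = c i exactly
      have hev : ∀ (i : Fin m) (n : ℕ), (C i).eval (n:ℂ) = c i := by
        intro i n
        have hdeg : (C i).natDegree = 0 :=
          Nat.le_zero.mp (hd0 ▸ (Finset.le_sup (f := fun i => (C i).natDegree) (Finset.mem_univ i) : (C i).natDegree ≤ d))
        obtain ⟨a, ha⟩ := Polynomial.natDegree_eq_zero.mp hdeg
        simp only [hcdef]
        rw [← ha, hd0, Polynomial.coeff_C_zero, Polynomial.eval_C]
      have hgu : ∀ n : ℕ, g n = u n - A - r n := by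
        intro n
        have hGn : G n = (u n : ℂ) - A - r n := by
          rw [hu n]
          simp only [hGdef, hev]
          ring
        have : ((g n : ℝ) : ℂ) = ((u n - A - r n : ℝ) : ℂ) := by
          rw [hgG n, hGn]; push_cast; ring
        exact_mod_cast this
      have h1 : ∀ᶠ n in atTop, A + 1 ≤ u n := hdiv.eventually_ge_atTop _
      have h2 : ∀ᶠ n in atTop, |r n| < 1 := by
        have habs : Tendsto (fun n => |r n|) atTop (nhds 0) := by
          have := hr.abs; simpa using this
        exact habs.eventually_lt_const one_pos
      filter_upwards [h1, h2] with n hn1 hn2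
      rw [hgu n]
      have := abs_lt.mp hn2
      linarith
    · -- degree ≥ 1 case
      have hd1 : 1 ≤ d := Nat.one_le_iff_ne_zero.mpr hd0
      have hpoly : ∀ i, Tendsto (fun n : ℕ => (C i).eval (n:ℂ) / (n:ℂ)^d) atTop (nhds (c i)) :=
        fun i => tendsto_eval_div_pow (Finset.le_sup (f := fun i => (C i).natDegree) (Finset.mem_univ i))
      have hterm : ∀ i : Fin m, Tendsto (fun n : ℕ =>
          ((C i).eval (n:ℂ) / (n:ℂ)^d - c i) * lam i ^ n
          + ((starRingEnd ℂ) ((C i).eval (n:ℂ)) / (n:ℂ)^d - (starRingEnd ℂ) (c i))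
              * ((starRingEnd ℂ) (lam i)) ^ n) atTop (nhds 0) := by
        intro i
        have h1 : Tendsto (fun n : ℕ => (C i).eval (n:ℂ) / (n:ℂ)^d - c i) atTop (nhds 0) := by
          simpa using (hpoly i).sub_const (c i)
        have e1 : Tendsto (fun n : ℕ => ((C i).eval (n:ℂ) / (n:ℂ)^d - c i) * lam i ^ n)
            atTop (nhds 0) := by
          apply squeeze_zero_norm (a := fun n : ℕ => ‖(C i).eval (n:ℂ) / (n:ℂ)^d - c i‖)
          · intro n; rw [norm_mul, norm_pow, hnorm, one_pow, mul_one]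
          · simpa using h1.norm
        have e2 : Tendsto (fun n : ℕ =>
            ((starRingEnd ℂ) ((C i).eval (n:ℂ)) / (n:ℂ)^d - (starRingEnd ℂ) (c i))
              * ((starRingEnd ℂ) (lam i)) ^ n) atTop (nhds 0) := by
          apply squeeze_zero_norm (a := fun n : ℕ => ‖(C i).eval (n:ℂ) / (n:ℂ)^d - c i‖)
          · intro n
            have hc : (starRingEnd ℂ) ((C i).eval (n:ℂ)) / (n:ℂ)^d - (starRingEnd ℂ) (c i)
                = (starRingEnd ℂ) ((C i).eval (n:ℂ) / (n:ℂ)^d - c i) := by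
              rw [map_sub, map_div₀, map_pow, Complex.conj_natCast]
            rw [hc, norm_mul, norm_pow, hnormc, one_pow, mul_one, RCLike.norm_conj]
          · simpa using h1.norm
        simpa using e1.add e2
      have hAterm : Tendsto (fun n : ℕ => (A:ℂ) / (n:ℂ)^d) atTop (nhds 0) := by
        apply squeeze_zero_norm' (a := fun n : ℕ => |A| / n)
        · filter_upwards [eventually_ge_atTop 1] with n hn
          have hn1 : (1:ℝ) ≤ n := Nat.one_le_cast.mpr hn
          rw [norm_div, Complex.norm_real, Real.norm_eq_abs, norm_pow, Complex.norm_natCast]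
          gcongr
          exact le_self_pow₀ (by linarith) hd0
        · exact tendsto_const_div_atTop_nhds_zero_nat _
      have hrterm : Tendsto (fun n : ℕ => (r n : ℂ) / (n:ℂ)^d) atTop (nhds 0) := by
        apply squeeze_zero_norm' (a := fun n : ℕ => |r n|)
        · filter_upwards [eventually_ge_atTop 1] with n hn
          have hn1 : (1:ℝ) ≤ n := Nat.one_le_cast.mpr hn
          have hpow : (1:ℝ) ≤ (n:ℝ)^d := one_le_pow₀ hn1
          rw [norm_div, Complex.norm_real, Real.norm_eq_abs, norm_pow, Complex.norm_natCast]
          calc |r n| / (n:ℝ)^d ≤ |r n| / 1 := by gcongr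
            _ = |r n| := div_one _
        · have := hr.abs; simpa using this
      have hid : ∀ n : ℕ, (u n : ℂ) / (n:ℂ)^d - G n
          = (A:ℂ) / (n:ℂ)^d
            + (∑ i, (((C i).eval (n:ℂ) / (n:ℂ)^d - c i) * lam i ^ n
              + ((starRingEnd ℂ) ((C i).eval (n:ℂ)) / (n:ℂ)^d - (starRingEnd ℂ) (c i))
                  * ((starRingEnd ℂ) (lam i)) ^ n))
            + (r n : ℂ) / (n:ℂ)^d := by
        intro n
        rw [hu n]
        simp only [hGdef]
        calc ((A:ℂ) + (∑ i, ((C i).eval (n:ℂ) * lam i ^ n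
                + (starRingEnd ℂ) ((C i).eval (n:ℂ)) * ((starRingEnd ℂ) (lam i)) ^ n)) + (r n:ℂ))
                / (n:ℂ)^d
              - ∑ i, (c i * lam i ^ n + (starRingEnd ℂ) (c i) * ((starRingEnd ℂ) (lam i)) ^ n)
            = (A:ℂ) / (n:ℂ)^d
              + ((∑ i, ((C i).eval (n:ℂ) * lam i ^ n
                  + (starRingEnd ℂ) ((C i).eval (n:ℂ)) * ((starRingEnd ℂ) (lam i)) ^ n)) / (n:ℂ)^d
                - ∑ i, (c i * lam i ^ n + (starRingEnd ℂ) (c i) * ((starRingEnd ℂ) (lam i)) ^ n))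
              + (r n:ℂ) / (n:ℂ)^d := by ring
          _ = _ := by
              rw [Finset.sum_div, ← Finset.sum_sub_distrib]
              congr 2
              refine Finset.sum_congr rfl fun i _ => ?_
              ring
      have hHC : Tendsto (fun n : ℕ => (u n : ℂ) / (n:ℂ)^d - G n) atTop (nhds 0) := by
        have hsum := tendsto_finset_sum (Finset.univ : Finset (Fin m)) (fun i _ => hterm i)
        rw [Finset.sum_const_zero] at hsum
        have := (hAterm.add hsum).add hrterm
        rw [add_zero, add_zero] at this
        exact Tendsto.congr (fun n => (hid n).symm) this
      have htail : Tendsto (fun n : ℕ => u n / (n:ℝ)^d - g n) atTop (nhds 0) := by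
        have hre : ∀ n : ℕ, u n / (n:ℝ)^d - g n = ((u n : ℂ) / (n:ℂ)^d - G n).re := by
          intro n
          have : ((u n / (n:ℝ)^d - g n : ℝ) : ℂ) = (u n : ℂ) / (n:ℂ)^d - G n := by
            push_cast
            rw [hgG n]
          rw [← this, Complex.ofReal_re]
        refine Tendsto.congr (fun n => (hre n).symm) ?_
        have := (Complex.continuous_re.tendsto 0).comp hHC
        rw [Complex.zero_re] at this; exact this
      have hpos : ∀ᶠ n in atTop, (0:ℝ) ≤ u n := hdiv.eventually_ge_atTop 0
      have h3 : ∀ᶠ n in atTop, |u n / (n:ℝ)^d - g n| < ε := by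
        have habs : Tendsto (fun n => |u n / (n:ℝ)^d - g n|) atTop (nhds 0) := by
          have := htail.abs; simpa using this
        exact habs.eventually_lt_const hε
      filter_upwards [hpos, h3] with n hn1 hn2
      have hq : 0 ≤ u n / (n:ℝ)^d := div_nonneg hn1 (by positivity)
      have := abs_lt.mp hn2
      linarith
  -- final contradiction
  set ε : ℝ := min 1 (Lr / (2*(M+1))) with hεdef
  have hε : 0 < ε := lt_min one_pos (by positivity)
  have hptw : ∀ᶠ n in atTop, 0 ≤ (M * g n + (M*ε + ε^2)) - (g n)^2 := by
    filter_upwards [hglb ε hε] with n hn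
    have h2 := abs_le.mp (hgM n)
    nlinarith [mul_nonneg (sub_nonneg.mpr h2.2) (by linarith : (0:ℝ) ≤ g n + ε),
      mul_nonneg hε.le (by linarith : (0:ℝ) ≤ g n + ε)]
  have hmean3 : Tendsto (fun N : ℕ =>
      (∑ n ∈ Finset.range N, ((M * g n + (M*ε + ε^2)) - (g n)^2)) / (N:ℝ)) atTop
      (nhds ((M * 0 + (M*ε + ε^2)) - Lr)) := by
    refine Tendsto.congr' ?_ (((hMeang.const_mul M).add_const (M*ε + ε^2)).sub hMeang2)
    filter_upwards [eventually_ge_atTop 1] with N hN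
    have hN0 : (N:ℝ) ≠ 0 := Nat.cast_ne_zero.mpr (by omega)
    rw [Finset.sum_sub_distrib, Finset.sum_add_distrib, Finset.sum_const, Finset.card_range,
      ← Finset.mul_sum, nsmul_eq_mul]
    field_simp
  have hfin := cesaro_nonneg hptw hmean3
  have hεle : ε ≤ 1 := min_le_left _ _
  have hεle2 : ε ≤ Lr / (2*(M+1)) := min_le_right _ _
  have hkey : (M+1) * ε ≤ Lr / 2 := by
    rw [le_div_iff₀ (by positivity : (0:ℝ) < 2*(M+1))] at hεle2
    nlinarith
  nlinarith
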